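/- In the blowup model, suppose Λ is A*-dense for some constant A* > 0. Then there is a constant C > 0, depending only on A* and α_min, such that for all reals S > 0 and x > S, the section s_x blows up in time t_max(x) ≤ C/S; explicitly, one may take C = 2A*·(1 + α_min)/(α_min − 1). (This is the abstract content of the paper's Lemma: sections with large initial value blow up quickly, the A*-density hypothesis being what the paper deduces from ergodicity of the translation flow on the invariant flat surface.) -/

import Mathlib

/-!
STATEMENT 5: In the blowup model, if `Λ` is `A*`-dense then there is a constant `C > 0`
depending only on `A*` and `αmin` — explicitly `C = 2A*(1 + αmin)/(αmin − 1)` — such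
that for all `S > 0` and every initial value `x > S`, the section `s_x` blows up in
time `t_max x ≤ C/S`.
-/

open scoped Classical

open Set in
/-- The blowup model: magnification bounds `1 < αmin ≤ αmax`, a set `Λ ⊆ (0,∞) × (0,∞)`
of singularities with distinct first coordinates which is finite in every box
`(0,T] × (0,H]`, and a magnification function `mag` taking values in `[αmin, αmax]`
on `Λ`. -/
structure BlowupModel where
  αmin : ℝ
  αmax : ℝ
  one_lt_αmin : 1 < αmin
  αmin_le_αmax : αmin ≤ αmax
  Λ : Set (ℝ × ℝ)
  Λ_pos : ∀ p ∈ Λ, 0 < p.1 ∧ 0 < p.2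
  Λ_inj : ∀ p ∈ Λ, ∀ q ∈ Λ, p.1 = q.1 → p = q
  Λ_locFin : ∀ T H : ℝ, (Λ ∩ Set.Ioc 0 T ×ˢ Set.Ioc 0 H).Finite
  mag : ℝ × ℝ → ℝ
  mag_mem : ∀ p ∈ Λ, αmin ≤ mag p ∧ mag p ≤ αmax

namespace BlowupModel

/-- The singularities that a section of current value `s` can hit after time `τ`. -/
def eventSet (M : BlowupModel) (τ s : ℝ) : Set (ℝ × ℝ) :=
  {p | p ∈ M.Λ ∧ τ < p.1 ∧ p.2 < s}

/-- The singularity realizing the next event after time `τ` for a section of current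
value `s` (the one with least time coordinate; junk value if there is none). -/
noncomputable def nextSing (M : BlowupModel) (τ s : ℝ) : ℝ × ℝ :=
  Classical.epsilon fun p => p ∈ M.eventSet τ s ∧ ∀ q ∈ M.eventSet τ s, p.1 ≤ q.1

/-- `evt M x n` is the pair (time of the `n`-th event, value of the section `s_x` just
after the `n`-th event), starting from `evt M x 0 = (0, x)`; at an event at the
singularity `(t,b)` the value jumps from `s` to `b + mag (t,b) * (s - b)`.  If no
further event occurs, the pair is repeated forever. -/
noncomputable def evt (M : BlowupModel) (x : ℝ) : ℕ → ℝ × ℝ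
  | 0 => (0, x)
  | n + 1 =>
    let τ := (evt M x n).1
    let s := (evt M x n).2
    if (M.eventSet τ s).Nonempty then
      ((M.nextSing τ s).1,
        (M.nextSing τ s).2 + M.mag (M.nextSing τ s) * (s - (M.nextSing τ s).2))
    else (τ, s)

/-- The blowup time of the section `s_x`: the supremum of the event times if there are
infinitely many events, and `∞` otherwise. -/
noncomputable def tmax (M : BlowupModel) (x : ℝ) : EReal :=
  if ∀ n, (M.eventSet (M.evt x n).1 (M.evt x n).2).Nonempty then
    ⨆ n, ((M.evt x n).1 : EReal)
  else ⊤

/-- The value of the section `s_x` at time `t` (meaningful for `0 ≤ t < tmax x`): the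
value just after the last event at time `≤ t`. -/
noncomputable def sx (M : BlowupModel) (x t : ℝ) : ℝ :=
  sSup ((fun n => (M.evt x n).2) '' {n | (M.evt x n).1 ≤ t})

end BlowupModel

/-- `Λ` is `A`-dense: every box `(t, t+w] × (0, h]` with `t ≥ 0` and area `w·h ≥ A`
contains a singularity. -/
def BlowupModel.ADense (M : BlowupModel) (A : ℝ) : Prop :=
  ∀ t : ℝ, 0 ≤ t → ∀ w h : ℝ, 0 < w → 0 < h → A ≤ w * h →
    ∃ p ∈ M.Λ, t < p.1 ∧ p.1 ≤ t + w ∧ p.2 ≤ h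


namespace BlowupModel

lemma nextSing_spec (M : BlowupModel) {τ s : ℝ} (hne : (M.eventSet τ s).Nonempty) :
    M.nextSing τ s ∈ M.eventSet τ s ∧ ∀ q ∈ M.eventSet τ s, (M.nextSing τ s).1 ≤ q.1 := by
  apply Classical.epsilon_spec
    (p := fun p => p ∈ M.eventSet τ s ∧ ∀ q ∈ M.eventSet τ s, p.1 ≤ q.1)
  obtain ⟨p₀, hp₀⟩ := hne
  have hF : (M.eventSet τ s ∩ {p : ℝ × ℝ | p.1 ≤ p₀.1}).Finite := by
    apply (M.Λ_locFin p₀.1 s).subset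
    rintro p ⟨⟨hΛ, hτ, hb⟩, hle⟩
    exact ⟨hΛ, ⟨(M.Λ_pos p hΛ).1, hle⟩, ⟨(M.Λ_pos p hΛ).2, hb.le⟩⟩
  obtain ⟨p, hp, hmin⟩ := Set.Finite.exists_minimalFor Prod.fst _ hF ⟨p₀, hp₀, show p₀.1 ≤ p₀.1 from le_refl _⟩
  refine ⟨p, hp.1, fun q hq => ?_⟩
  by_cases h : q.1 ≤ p₀.1
  · rcases le_total p.1 q.1 with h' | h'
    · exact h'
    · exact hmin ⟨hq, h⟩ h'
  · exact hp.2.trans (le_of_not_ge h)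

lemma evt_succ_of_nonempty (M : BlowupModel) (x : ℝ) (n : ℕ)
    (hne : (M.eventSet (M.evt x n).1 (M.evt x n).2).Nonempty) :
    M.evt x (n+1) = ((M.nextSing (M.evt x n).1 (M.evt x n).2).1,
      (M.nextSing (M.evt x n).1 (M.evt x n).2).2 +
        M.mag (M.nextSing (M.evt x n).1 (M.evt x n).2) *
          ((M.evt x n).2 - (M.nextSing (M.evt x n).1 (M.evt x n).2).2)) := by
  rw [evt]
  simp only [if_pos hne]

lemma eventSet_nonempty' (M : BlowupModel) {A : ℝ} (hA : 0 < A) (hdense : M.ADense A)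
    {τ s : ℝ} (hτ : 0 ≤ τ) (hs : 0 < s) : (M.eventSet τ s).Nonempty := by
  obtain ⟨p, hΛ, h1, h2, h3⟩ := hdense τ hτ (2*A/s) (s/2) (by positivity) (by positivity)
    (le_of_eq (by field_simp))
  exact ⟨p, hΛ, h1, lt_of_le_of_lt h3 (by linarith)⟩

end BlowupModel


namespace BlowupModel

lemma all_times_bound (M : BlowupModel) {A S x : ℝ} (hA : 0 < A) (hdense : M.ADense A)
    (hS : 0 < S) (hx : S < x) :
    (∀ n, (M.eventSet (M.evt x n).1 (M.evt x n).2).Nonempty) ∧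
    ∀ n, (M.evt x n).1 ≤ 2 * A * (1 + M.αmin) / (M.αmin - 1) / S := by
  have h1 : 1 < M.αmin := M.one_lt_αmin
  set α := M.αmin with hα
  have hα1 : (0:ℝ) < α - 1 := by linarith
  set K : ℝ := (1 + α) / (α - 1) with hK
  set c : ℝ := (1 + α) / 2 with hc
  have hK1 : 1 ≤ K := by rw [hK, le_div_iff₀ hα1]; linarith
  have hKpos : (0:ℝ) < K := lt_of_lt_of_le zero_lt_one hK1
  have hc1 : (1:ℝ) < c := by rw [hc]; linarith
  have h2AK : (0:ℝ) < 2 * A * K := by positivity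
  -- basic state facts
  have goodrec : ∀ n, 0 ≤ (M.evt x n).1 ∧ S < (M.evt x n).2 := by
    intro n
    induction n with
    | zero => exact ⟨le_refl 0, hx⟩
    | succ n ih =>
      have hnen : (M.eventSet (M.evt x n).1 (M.evt x n).2).Nonempty :=
        M.eventSet_nonempty' hA hdense ih.1 (hS.trans ih.2)
      rw [M.evt_succ_of_nonempty x n hnen]
      set p := M.nextSing (M.evt x n).1 (M.evt x n).2 with hp
      obtain ⟨hΛ, hτ, hb⟩ := (M.nextSing_spec hnen).1
      have hmag : α ≤ M.mag p := (M.mag_mem _ hΛ).1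
      constructor
      · exact le_of_lt (lt_of_le_of_lt ih.1 hτ)
      · show S < p.2 + M.mag p * ((M.evt x n).2 - p.2)
        nlinarith [ih.2, mul_nonneg (by linarith : (0:ℝ) ≤ M.mag p - 1)
          (by linarith : (0:ℝ) ≤ (M.evt x n).2 - p.2)]
  have hne : ∀ n, (M.eventSet (M.evt x n).1 (M.evt x n).2).Nonempty :=
    fun n => M.eventSet_nonempty' hA hdense (goodrec n).1 (hS.trans (goodrec n).2)
  refine ⟨hne, ?_⟩
  have hτmono : ∀ k l : ℕ, k ≤ l → (M.evt x k).1 ≤ (M.evt x l).1 := by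
    intro k l hkl
    exact monotone_nat_of_le_succ (f := fun n => (M.evt x n).1)
      (fun n => by
        rw [M.evt_succ_of_nonempty x n (hne n)]
        exact ((M.nextSing_spec (hne n)).1).2.1.le) hkl
  have hsmono : ∀ k l : ℕ, k ≤ l → (M.evt x k).2 ≤ (M.evt x l).2 := by
    intro k l hkl
    refine monotone_nat_of_le_succ (f := fun n => (M.evt x n).2) (fun n => ?_) hkl
    rw [M.evt_succ_of_nonempty x n (hne n)]
    set p := M.nextSing (M.evt x n).1 (M.evt x n).2 with hp
    obtain ⟨hΛ, hτ, hb⟩ := (M.nextSing_spec (hne n)).1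
    have hmag : α ≤ M.mag p := (M.mag_mem _ hΛ).1
    show (M.evt x n).2 ≤ p.2 + M.mag p * ((M.evt x n).2 - p.2)
    nlinarith [mul_nonneg (by linarith : (0:ℝ) ≤ M.mag p - 1)
      (by linarith : (0:ℝ) ≤ (M.evt x n).2 - p.2)]
  -- one round of the doubling argument
  have step : ∀ n : ℕ, (M.evt x n).1 + 2 * A * K / (M.evt x n).2 ≤ 2 * A * K / S →
      (∃ m, n < m ∧ (M.evt x m).1 + 2 * A * K / (M.evt x m).2 ≤ 2 * A * K / S) ∨
      (∀ k, (M.evt x k).1 ≤ 2 * A * K / S) := by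
    intro n hInv
    have hτn0 : 0 ≤ (M.evt x n).1 := (goodrec n).1
    have hsn : 0 < (M.evt x n).2 := hS.trans (goodrec n).2
    obtain ⟨q, hqΛ, hq1, hq2, hq3⟩ := hdense (M.evt x n).1 hτn0
      (2 * A / (M.evt x n).2) ((M.evt x n).2 / 2) (by positivity) (by positivity)
      (le_of_eq (by field_simp))
    have hbound : (M.evt x n).1 + 2 * A / (M.evt x n).2 ≤ 2 * A * K / S := by
      have h2 : 2 * A / (M.evt x n).2 ≤ 2 * A * K / (M.evt x n).2 := by
        have h2a : 2 * A ≤ 2 * A * K := by nlinarith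
        exact div_le_div_of_nonneg_right h2a hsn.le |>.trans_eq rfl
      linarith
    by_cases hall : ∀ k, n ≤ k → (M.evt x k).1 < q.1
    · right
      intro k
      have h3 : (M.evt x k).1 ≤ (M.evt x (max k n)).1 := hτmono k _ (le_max_left _ _)
      have h4 : (M.evt x (max k n)).1 < q.1 := hall _ (le_max_right _ _)
      linarith
    · left
      push_neg at hall
      have hex : ∃ k, n ≤ k ∧ q.1 ≤ (M.evt x k).1 := hall
      have hmspec := Nat.find_spec hex
      set m := Nat.find hex with hm
      have hm1 : n < m := by
        rcases lt_or_eq_of_le hmspec.1 with h | h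
        · exact h
        · exact absurd hmspec.2 (by rw [← h]; exact not_le.2 hq1)
      obtain ⟨m', hm'⟩ : ∃ m', m = m' + 1 := ⟨m - 1, by omega⟩
      have hm'n : n ≤ m' := by omega
      have hm'lt : (M.evt x m').1 < q.1 := by
        by_contra h
        exact Nat.find_min hex (by omega : m' < Nat.find hex) ⟨hm'n, not_lt.1 h⟩
      have hqev : q ∈ M.eventSet (M.evt x m').1 (M.evt x m').2 :=
        ⟨hqΛ, hm'lt, lt_of_le_of_lt hq3 (by
          have := hsmono n m' hm'n; linarith)⟩
      have hNS := M.nextSing_spec (hne m')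
      have hτm : (M.evt x (m' + 1)).1 = (M.nextSing (M.evt x m').1 (M.evt x m').2).1 := by
        rw [M.evt_succ_of_nonempty x m' (hne m')]
      have heq : M.nextSing (M.evt x m').1 (M.evt x m').2 = q := by
        apply M.Λ_inj _ hNS.1.1 _ hqΛ
        apply le_antisymm (hNS.2 q hqev)
        rw [← hτm]
        exact hm' ▸ hmspec.2
      have hτmeq : (M.evt x (m' + 1)).1 = q.1 := by rw [hτm, heq]
      have hsm : (M.evt x (m' + 1)).2 = q.2 + M.mag q * ((M.evt x m').2 - q.2) := by
        rw [M.evt_succ_of_nonempty x m' (hne m'), heq]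
      -- growth
      have hmag : α ≤ M.mag q := (M.mag_mem _ hqΛ).1
      have hsm'ge : (M.evt x n).2 ≤ (M.evt x m').2 := hsmono n m' hm'n
      have hq2pos : 0 < q.2 := (M.Λ_pos q hqΛ).2
      have hgrow : c * (M.evt x n).2 ≤ (M.evt x (m' + 1)).2 := by
        rw [hsm, hc]
        nlinarith [mul_nonneg (by linarith : (0:ℝ) ≤ M.mag q - α)
          (by linarith [hqev.2.2] : (0:ℝ) ≤ (M.evt x m').2 - q.2),
          mul_nonneg (by linarith : (0:ℝ) ≤ α - 1) ((by linarith : (0:ℝ) ≤ (M.evt x m').2 - (M.evt x n).2)),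
          mul_nonneg (by linarith : (0:ℝ) ≤ α - 1) (by linarith : (0:ℝ) ≤ (M.evt x n).2 / 2 - q.2)]
      refine ⟨m' + 1, by omega, ?_⟩
      have hcsn : 0 < c * (M.evt x n).2 := by positivity
      have hdiv : 2 * A * K / (M.evt x (m' + 1)).2 ≤ 2 * A * K / (c * (M.evt x n).2) := by
        gcongr
      have halg : 2 * A / (M.evt x n).2 + 2 * A * K / (c * (M.evt x n).2)
          = 2 * A * K / (M.evt x n).2 := by
        rw [hK, hc]
        field_simp
        ring
      rw [hτmeq]
      linarith
  -- iterate
  have key : ∀ j : ℕ, (∃ m, j ≤ m ∧ (M.evt x m).1 + 2 * A * K / (M.evt x m).2 ≤ 2 * A * K / S)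
      ∨ (∀ k, (M.evt x k).1 ≤ 2 * A * K / S) := by
    intro j
    induction j with
    | zero =>
      refine Or.inl ⟨0, le_refl 0, ?_⟩
      show (M.evt x 0).1 + 2 * A * K / (M.evt x 0).2 ≤ 2 * A * K / S
      have : (M.evt x 0) = (0, x) := rfl
      rw [this]
      have : 2 * A * K / x ≤ 2 * A * K / S := by
        gcongr
      simpa using this
    | succ j ih =>
      rcases ih with ⟨m, hjm, hm⟩ | h
      · rcases step m hm with ⟨m2, hmm2, hm2⟩ | h
        · exact Or.inl ⟨m2, by omega, hm2⟩
        · exact Or.inr h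
      · exact Or.inr h
  have final : ∀ k, (M.evt x k).1 ≤ 2 * A * K / S := by
    intro k
    rcases key k with ⟨m, hkm, hm⟩ | h
    · have h2 : 0 < 2 * A * K / (M.evt x m).2 :=
        div_pos h2AK (hS.trans (goodrec m).2)
      linarith [hτmono k m hkm]
    · exact h k
  intro n
  have : 2 * A * K / S = 2 * A * (1 + α) / (α - 1) / S := by rw [hK]; ring
  rw [← this]
  exact final n

end BlowupModel

theorem statement5 (M : BlowupModel) (A : ℝ) (hA : 0 < A) (hdense : M.ADense A) :
    ∃ C : ℝ, 0 < C ∧ C = 2 * A * (1 + M.αmin) / (M.αmin - 1) ∧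
      ∀ S x : ℝ, 0 < S → S < x → M.tmax x ≤ ((C / S : ℝ) : EReal) := by
  refine ⟨2 * A * (1 + M.αmin) / (M.αmin - 1), ?_, rfl, ?_⟩
  · apply div_pos
    · nlinarith [M.one_lt_αmin]
    · linarith [M.one_lt_αmin]
  · intro S x hS hx
    obtain ⟨hne, hbd⟩ := M.all_times_bound hA hdense hS hx
    rw [BlowupModel.tmax, if_pos hne]
    exact iSup_le fun n => by exact_mod_cast hbd n
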